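/- Let X = ℝ × ℤ with the lexicographic order and the order topology, and let 𝔠 = 2^{ℵ₀}. Then X is not [𝔠, 𝔠]-compact, yet X has no gap of type 𝔠: every gap of X has both types at most ℵ₀. -/

import Mathlib

open Cardinal Set

universe u

/-- `Y` is `l`-full on the right in `X`: for every `y ∈ Y`, the union of the
intervals `(y, y')_X` over larger elements `y' ∈ Y` has cardinality `l`. -/
def FullRight {X : Type u} [LinearOrder X] (l : Cardinal.{u}) (Y : Set X) : Prop :=
  ∀ y ∈ Y, #{x : X | ∃ y' ∈ Y, y < y' ∧ y < x ∧ x < y'} = l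

/-- `Y` is `l`-full on the left in `X`. -/
def FullLeft {X : Type u} [LinearOrder X] (l : Cardinal.{u}) (Y : Set X) : Prop :=
  ∀ y ∈ Y, #{x : X | ∃ y' ∈ Y, y' < y ∧ y' < x ∧ x < y} = l

/-- `Y` is completely `l`-full in `X`: every interval of `X` between two
elements of `Y` has cardinality `l`. -/
def CompletelyFull {X : Type u} [LinearOrder X] (l : Cardinal.{u}) (Y : Set X) : Prop :=
  ∀ y ∈ Y, ∀ y' ∈ Y, y < y' → #{x : X | y < x ∧ x < y'} = l
/-- `X` is `[l, l]`-compact: every open cover of cardinality `≤ l` has a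
subcover of cardinality `< l`. -/
def CompactCC (l : Cardinal.{u}) (X : Type u) [TopologicalSpace X] : Prop :=
  ∀ 𝒰 : Set (Set X), (∀ U ∈ 𝒰, IsOpen U) → ⋃₀ 𝒰 = Set.univ → #𝒰 ≤ l →
    ∃ 𝒱 ⊆ 𝒰, ⋃₀ 𝒱 = Set.univ ∧ #𝒱 < l

/-- `(A, B)` is a gap of the linearly ordered topological space `X`. -/
def IsGap {X : Type u} [LinearOrder X] [TopologicalSpace X] (A B : Set X) : Prop :=
  IsOpen A ∧ IsOpen B ∧ A ∪ B = Set.univ ∧ A.Nonempty ∧ B.Nonempty ∧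
  (∀ a ∈ A, ∀ b ∈ B, a < b) ∧
  (∀ a ∈ A, ∃ a' ∈ A, a < a') ∧ (∀ b ∈ B, ∃ b' ∈ B, b' < b)

/-- The cofinality of a subset `A` of a linear order: the least cardinality of
a subset of `A` cofinal in `A`. -/
noncomputable def setCof {X : Type u} [LinearOrder X] (A : Set X) : Cardinal :=
  sInf {c | ∃ S ⊆ A, (∀ a ∈ A, ∃ s ∈ S, a ≤ s) ∧ #S = c}

/-- The coinitiality of a subset `B` of a linear order: the least cardinality
of a subset of `B` coinitial in `B`. -/
noncomputable def setCoi {X : Type u} [LinearOrder X] (B : Set X) : Cardinal :=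
  sInf {c | ∃ S ⊆ B, (∀ b ∈ B, ∃ s ∈ S, s ≤ b) ∧ #S = c}

/-- `k` is a type of the gap `(A, B)`. -/
def GapHasType {X : Type u} [LinearOrder X] (A B : Set X) (k : Cardinal) : Prop :=
  setCof A = k ∨ setCoi B = k

namespace Stmt15Aux

noncomputable def fst1 (p : Lex (ℝ × ℤ)) : ℝ := (ofLex p).1

lemma lt_iff' (p q : Lex (ℝ × ℤ)) :
    p < q ↔ fst1 p < fst1 q ∨ (fst1 p = fst1 q ∧ (ofLex p).2 < (ofLex q).2) :=
  Prod.Lex.lt_iff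

lemma le_iff' (p q : Lex (ℝ × ℤ)) :
    p ≤ q ↔ fst1 p < fst1 q ∨ (fst1 p = fst1 q ∧ (ofLex p).2 ≤ (ofLex q).2) :=
  Prod.Lex.le_iff

lemma fst1_toLex (x : ℝ) (n : ℤ) : fst1 (toLex (x, n)) = x := rfl

lemma setCof_le {Y : Type} [LinearOrder Y] {A S : Set Y} (hS : S ⊆ A)
    (hcof : ∀ a ∈ A, ∃ s ∈ S, a ≤ s) : setCof A ≤ #S :=
  csInf_le' ⟨S, hS, hcof, rfl⟩

lemma setCoi_le {Y : Type} [LinearOrder Y] {B S : Set Y} (hS : S ⊆ B)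
    (hcoi : ∀ b ∈ B, ∃ s ∈ S, s ≤ b) : setCoi B ≤ #S :=
  csInf_le' ⟨S, hS, hcoi, rfl⟩

lemma gap_aux (A B : Set (Lex (ℝ × ℤ)))
    (hunion : A ∪ B = Set.univ)
    (hAne : A.Nonempty) (hBne : B.Nonempty)
    (hlt : ∀ a ∈ A, ∀ b ∈ B, a < b)
    (hnomax : ∀ a ∈ A, ∃ a' ∈ A, a < a') :
    setCof A ≤ Cardinal.aleph0 ∧ setCoi B ≤ Cardinal.aleph0 := by
  -- A is a down-set
  have hdown : ∀ a ∈ A, ∀ x : Lex (ℝ × ℤ), x ≤ a → x ∈ A := by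
    intro a ha x hx
    by_contra hxA
    have hxB : x ∈ B := by
      rcases (Set.mem_union ..).1 (hunion ▸ Set.mem_univ x) with h | h
      · exact absurd h hxA
      · exact h
    exact absurd (hlt a ha x hxB) (not_lt.2 hx)
  obtain ⟨b0, hb0⟩ := hBne
  have hbdd : BddAbove (fst1 '' A) := by
    refine ⟨fst1 b0, ?_⟩
    rintro _ ⟨a, ha, rfl⟩
    rcases (lt_iff' a b0).1 (hlt a ha b0 hb0) with h | h
    · exact h.le
    · exact h.1.le
  have hAne' : (fst1 '' A).Nonempty := hAne.image _
  set r : ℝ := sSup (fst1 '' A) with hr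
  have hle_r : ∀ a ∈ A, fst1 a ≤ r := fun a ha => le_csSup hbdd ⟨a, ha, rfl⟩
  by_cases hcase : ∃ n : ℤ, toLex (r, n) ∈ A
  · -- Case 1: the fiber over r meets A; then all of it is in A
    obtain ⟨n0, hn0⟩ := hcase
    have hstep : ∀ n : ℤ, toLex (r, n) ∈ A → toLex (r, n + 1) ∈ A := by
      intro n hn
      by_contra hB
      have hB' : toLex (r, n + 1) ∈ B := by
        rcases (Set.mem_union ..).1 (hunion ▸ Set.mem_univ (toLex (r, n+1))) with h | h
        · exact absurd h hB
        · exact h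
      obtain ⟨a', ha', hlt'⟩ := hnomax _ hn
      have h2 := hlt a' ha' _ hB'
      rcases (lt_iff' _ _).1 hlt' with h | h
      · rcases (lt_iff' _ _).1 h2 with h' | h'
        · exact absurd (h.trans h') (lt_irrefl _)
        · rw [fst1_toLex] at h; rw [h'.1, fst1_toLex] at h; exact absurd h (lt_irrefl _)
      · rcases (lt_iff' _ _).1 h2 with h' | h'
        · rw [← h.1, fst1_toLex] at h'; exact absurd h' (lt_irrefl _)
        · have h3 := h.2; have h4 := h'.2
          simp only [ofLex_toLex] at h3 h4
          omega
    have hall : ∀ n : ℤ, toLex (r, n) ∈ A := by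
      intro n
      rcases le_or_gt n0 n with h | h
      · exact Int.le_induction hn0 (fun m _ ih => hstep m ih) n h
      · exact hdown _ hn0 _ ((le_iff' _ _).2 (Or.inr ⟨rfl, h.le⟩))
    constructor
    · refine (setCof_le (S := Set.range (fun n : ℤ => toLex (r, n))) ?_ ?_).trans ?_
      · rintro _ ⟨n, rfl⟩; exact hall n
      · intro a ha
        refine ⟨toLex (r, (ofLex a).2), ⟨(ofLex a).2, rfl⟩, (le_iff' _ _).2 ?_⟩
        rcases lt_or_eq_of_le (hle_r a ha) with h | h
        · exact Or.inl h
        · exact Or.inr ⟨h, le_refl _⟩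
      · exact Cardinal.mk_range_le.trans (by simp)
    · refine (setCoi_le (S := Set.range (fun k : ℕ => toLex (r + 1/(k+1), 0))) ?_ ?_).trans ?_
      · rintro _ ⟨k, rfl⟩
        rcases (Set.mem_union ..).1 (hunion ▸ Set.mem_univ (toLex (r + 1/(k+1), 0))) with h | h
        · have h1 := hle_r _ h
          rw [fst1_toLex] at h1
          have hpos : (0:ℝ) < 1/(k+1) := by positivity
          linarith
        · exact h
      · intro b hb
        have hrb : r < fst1 b := by
          by_contra hc
          push_neg at hc
          have hbA : b ∈ A := by
            rcases lt_or_eq_of_le hc with h | h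
            · exact hdown _ (hall 0) _ ((le_iff' _ _).2 (Or.inl (by rwa [fst1_toLex])))
            · exact hdown _ (hall (ofLex b).2) _
                ((le_iff' _ _).2 (Or.inr ⟨by rw [fst1_toLex, h], le_refl _⟩))
          exact absurd (hlt b hbA b hb) (lt_irrefl _)
        obtain ⟨k, hk⟩ := exists_nat_one_div_lt (sub_pos.2 hrb)
        refine ⟨toLex (r + 1/(k+1), 0), ⟨k, rfl⟩, (le_iff' _ _).2 (Or.inl ?_)⟩
        rw [fst1_toLex]
        have : (1:ℝ)/(k+1) < fst1 b - r := hk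
        linarith
      · exact Cardinal.mk_range_le.trans (by simp)
  · -- Case 2: fiber over r misses A; A = {p | fst1 p < r}
    push_neg at hcase
    have hAlt : ∀ a ∈ A, fst1 a < r := by
      intro a ha
      rcases lt_or_eq_of_le (hle_r a ha) with h | h
      · exact h
      · exfalso
        have heq : a = toLex (r, (ofLex a).2) := by
          have h2 : ofLex a = (r, (ofLex a).2) := Prod.ext h rfl
          rw [← h2]
          rfl
        rw [heq] at ha
        exact hcase _ ha
    constructor
    · refine (setCof_le (S := Set.range (fun k : ℕ => toLex (r - 1/(k+1), 0))) ?_ ?_).trans ?_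
      · rintro _ ⟨k, rfl⟩
        have hpos : (0:ℝ) < 1/(k+1) := by positivity
        obtain ⟨_, ⟨a, ha, rfl⟩, hfa⟩ :=
          exists_lt_of_lt_csSup hAne' (show r - 1/(k+1) < r by linarith)
        exact hdown _ ha _ ((le_iff' _ _).2 (Or.inl (by rwa [fst1_toLex])))
      · intro a ha
        obtain ⟨k, hk⟩ := exists_nat_one_div_lt (sub_pos.2 (hAlt a ha))
        refine ⟨toLex (r - 1/(k+1), 0), ⟨k, rfl⟩, (le_iff' _ _).2 (Or.inl ?_)⟩
        rw [fst1_toLex]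
        have : (1:ℝ)/(k+1) < r - fst1 a := hk
        linarith
      · exact Cardinal.mk_range_le.trans (by simp)
    · refine (setCoi_le (S := Set.range (fun k : ℕ => toLex (r, -(k:ℤ)))) ?_ ?_).trans ?_
      · rintro _ ⟨k, rfl⟩
        rcases (Set.mem_union ..).1 (hunion ▸ Set.mem_univ (toLex (r, -(k:ℤ)))) with h | h
        · exact absurd (hAlt _ h) (by rw [fst1_toLex]; exact lt_irrefl r)
        · exact h
      · intro b hb
        have hrb : r ≤ fst1 b := by
          by_contra hc
          push_neg at hc
          obtain ⟨_, ⟨a, ha, rfl⟩, hfa⟩ := exists_lt_of_lt_csSup hAne' hc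
          have hbA : b ∈ A := hdown _ ha _ ((le_iff' _ _).2 (Or.inl hfa))
          exact absurd (hlt b hbA b hb) (lt_irrefl _)
        rcases lt_or_eq_of_le hrb with h | h
        · exact ⟨toLex (r, -(0:ℤ)), ⟨0, rfl⟩, (le_iff' _ _).2 (Or.inl (by rwa [fst1_toLex]))⟩
        · refine ⟨toLex (r, -(((-(ofLex b).2).toNat : ℕ) : ℤ)), ⟨(-(ofLex b).2).toNat, rfl⟩,
            (le_iff' _ _).2 (Or.inr ⟨by rw [fst1_toLex, h], ?_⟩)⟩
          simp only [ofLex_toLex]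
          omega
      · exact Cardinal.mk_range_le.trans (by simp)

end Stmt15Aux

open Stmt15Aux in
/-- Remark 1.7: `ℝ ×ₗ ℤ` with the order topology is not `[𝔠, 𝔠]`-compact but
has no gap of type `𝔠`: both types of every gap are at most `ℵ₀`. -/
theorem stmt15 :
    letI : TopologicalSpace (Lex (ℝ × ℤ)) := Preorder.topology (Lex (ℝ × ℤ))
    ¬ CompactCC Cardinal.continuum (Lex (ℝ × ℤ)) ∧
      ∀ A B : Set (Lex (ℝ × ℤ)), IsGap A B →
        setCof A ≤ Cardinal.aleph0 ∧ setCoi B ≤ Cardinal.aleph0 := by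
  letI : TopologicalSpace (Lex (ℝ × ℤ)) := Preorder.topology (Lex (ℝ × ℤ))
  haveI : OrderTopology (Lex (ℝ × ℤ)) := ⟨rfl⟩
  have hsing : ∀ p : Lex (ℝ × ℤ), IsOpen ({p} : Set (Lex (ℝ × ℤ))) := by
    intro p
    have heq : ({p} : Set (Lex (ℝ × ℤ))) =
        Set.Ioo (toLex ((ofLex p).1, (ofLex p).2 - 1)) (toLex ((ofLex p).1, (ofLex p).2 + 1)) := by
      ext q
      simp only [Set.mem_singleton_iff, Set.mem_Ioo]
      constructor
      · rintro rfl
        exact ⟨(lt_iff' _ _).2 (Or.inr ⟨rfl, by simp⟩), (lt_iff' _ _).2 (Or.inr ⟨rfl, by simp⟩)⟩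
      · rintro ⟨h1, h2⟩
        rcases (lt_iff' _ _).1 h1 with h | h <;> rcases (lt_iff' _ _).1 h2 with h' | h'
        · rw [fst1_toLex] at h; rw [fst1_toLex] at h'; exact absurd (h.trans h') (lt_irrefl _)
        · rw [fst1_toLex] at h; rw [h'.1] at h; rw [fst1_toLex] at h; exact absurd h (lt_irrefl _)
        · rw [fst1_toLex] at h h'; rw [← h.1] at h'; exact absurd h' (lt_irrefl _)
        · have hfst : fst1 q = (ofLex p).1 := by rw [← h.1, fst1_toLex]
          have h3 := h.2; have h4 := h'.2
          simp only [ofLex_toLex] at h3 h4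
          have hsnd : (ofLex q).2 = (ofLex p).2 := by omega
          have h5 : ofLex q = ofLex p := Prod.ext hfst hsnd
          calc q = toLex (ofLex q) := rfl
            _ = toLex (ofLex p) := by rw [h5]
            _ = p := rfl
    rw [heq]
    exact isOpen_Ioo
  constructor
  · -- not [𝔠,𝔠]-compact
    intro hcc
    have hcard : #(Lex (ℝ × ℤ)) = Cardinal.continuum := by
      rw [Cardinal.mk_congr (ofLex : Lex (ℝ × ℤ) ≃ ℝ × ℤ)]
      simp [Cardinal.mk_prod, Cardinal.mk_real, Cardinal.mk_int,
        Cardinal.mul_aleph0_eq Cardinal.aleph0_le_continuum]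
    set 𝒰 : Set (Set (Lex (ℝ × ℤ))) := Set.range (fun p : Lex (ℝ × ℤ) => ({p} : Set _)) with h𝒰
    have hmk𝒰 : #𝒰 = Cardinal.continuum := by
      rw [h𝒰, Cardinal.mk_range_eq _ (fun a b h => Set.singleton_injective h), hcard]
    obtain ⟨𝒱, h𝒱sub, h𝒱cov, h𝒱lt⟩ := hcc 𝒰
      (by rintro _ ⟨p, rfl⟩; exact hsing p)
      (by ext p
          simp only [Set.mem_sUnion, Set.mem_univ, iff_true]
          exact ⟨{p}, ⟨p, rfl⟩, rfl⟩)
      (hmk𝒰 ▸ le_refl _)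
    have h𝒱eq : 𝒱 = 𝒰 := by
      refine Set.Subset.antisymm h𝒱sub ?_
      rintro _ ⟨p, rfl⟩
      have hp : p ∈ ⋃₀ 𝒱 := h𝒱cov ▸ Set.mem_univ p
      obtain ⟨V, hV𝒱, hpV⟩ := hp
      obtain ⟨q, rfl⟩ := h𝒱sub hV𝒱
      obtain rfl : q = p := (Set.mem_singleton_iff.1 hpV).symm
      exact hV𝒱
    rw [h𝒱eq, hmk𝒰] at h𝒱lt
    exact lt_irrefl _ h𝒱lt
  · rintro A B ⟨_, _, hunion, hAne, hBne, hlt, hnomax, _⟩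
    exact gap_aux A B hunion hAne hBne hlt hnomax
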